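/- Let Γ be a group and let 𝒳 be a Chabauty-closed set of subgroups of Γ. Let 𝒳_min denote the set of X ∈ 𝒳 that are minimal in 𝒳, i.e. such that X' ∈ 𝒳 and X' ≤ X imply X' = X. If every X ∈ 𝒳_min is finitely generated, then 𝒳_min is a finite set. -/
import Mathlib


/-- The characteristic function of a subgroup, viewed as an element of the product space
`G → Bool` (with `Bool` discrete and `G → Bool` carrying the product topology).  The Chabauty
topology on the set of subgroups of `G` is the subspace topology under `H ↦ chi H`. -/
noncomputable def chi {G : Type*} [Group G] (H : Subgroup G) : G → Bool :=
  fun g => @decide (g ∈ H) (Classical.propDecidable _)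

lemma chi_apply {G : Type*} [Group G] (H : Subgroup G) (g : G) :
    chi H g = true ↔ g ∈ H := by
  simp [chi]

lemma chi_injective {G : Type*} [Group G] : Function.Injective (chi (G := G)) := by
  intro H K h
  ext g
  have := congrFun h g
  rw [← chi_apply H g, ← chi_apply K g, this]

/-- An intersection of a nonempty chain in a Chabauty-closed family is in the family. -/
lemma sInf_chain_mem {Γ : Type*} [Group Γ] {𝒳 : Set (Subgroup Γ)}
    (hX : IsClosed (chi '' 𝒳)) {c : Set (Subgroup Γ)} (hc𝒳 : c ⊆ 𝒳)
    (hchain : IsChain (· ≤ ·) c) (hne : c.Nonempty) : sInf c ∈ 𝒳 := by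
  classical
  have hmem : chi (sInf c) ∈ closure (chi '' 𝒳) := by
    rw [mem_closure_iff]
    intro U hU hcU
    obtain ⟨I, u, hu, hsub⟩ := isOpen_pi_iff.mp hU _ hcU
    -- find K ∈ c agreeing with sInf c on I
    have key : ∀ I : Finset Γ, ∃ K ∈ c, ∀ i ∈ I, chi K i = chi (sInf c) i := by
      intro I
      induction I using Finset.induction_on with
      | empty => exact ⟨hne.choose, hne.choose_spec, fun i hi => absurd hi (by simp)⟩
      | @insert a s hnotmem ih =>
        obtain ⟨K, hKc, hK⟩ := ih
        by_cases ha : a ∈ sInf c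
        · refine ⟨K, hKc, fun i hi => ?_⟩
          rcases Finset.mem_insert.mp hi with rfl | hi
          · have haK : i ∈ K := (sInf_le hKc) ha
            simp [chi, haK, ha]
          · exact hK i hi
        · obtain ⟨K', hK'c, haK'⟩ : ∃ K' ∈ c, a ∉ K' := by
            by_contra hcon
            push_neg at hcon
            exact ha (Subgroup.mem_sInf.mpr hcon)
          -- take the smaller of K and K'
          rcases eq_or_ne K K' with rfl | hKK'
          · refine ⟨K, hKc, fun i hi => ?_⟩
            rcases Finset.mem_insert.mp hi with rfl | hi
            · simp [chi, haK', ha]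
            · exact hK i hi
          rcases hchain hKc hK'c hKK' with h | h
          · refine ⟨K, hKc, fun i hi => ?_⟩
            rcases Finset.mem_insert.mp hi with rfl | hi
            · have hnK : i ∉ K := fun hx => haK' (h hx)
              simp [chi, hnK, ha]
            · exact hK i hi
          · refine ⟨K', hK'c, fun i hi => ?_⟩
            rcases Finset.mem_insert.mp hi with rfl | hi
            · simp [chi, haK', ha]
            · rw [← hK i hi]
              -- chi K' i = chi K i : need same truth of membership
              by_cases hiK : i ∈ sInf c
              · have h1 : i ∈ K := (sInf_le hKc) hiK
                have h2 : i ∈ K' := (sInf_le hK'c) hiK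
                simp [chi, h1, h2]
              · have h1 : i ∉ K := by
                  intro hx
                  have := hK i hi
                  simp [chi, hx, hiK] at this
                have h2 : i ∉ K' := fun hx => h1 (h hx)
                simp [chi, h1, h2]
    obtain ⟨K, hKc, hK⟩ := key I
    refine ⟨chi K, hsub ?_, ⟨K, hc𝒳 hKc, rfl⟩⟩
    intro i hi
    rw [hK i hi]
    exact (hu i hi).2
  rw [hX.closure_eq] at hmem
  obtain ⟨K, hK𝒳, hKeq⟩ := hmem
  rwa [chi_injective hKeq] at hK𝒳

/-- Every element of a Chabauty-closed family contains a minimal element. -/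
lemma exists_minimal_le {Γ : Type*} [Group Γ] {𝒳 : Set (Subgroup Γ)}
    (hX : IsClosed (chi '' 𝒳)) {Y : Subgroup Γ} (hY : Y ∈ 𝒳) :
    ∃ X ∈ 𝒳, X ≤ Y ∧ ∀ X' ∈ 𝒳, X' ≤ X → X' = X := by
  have hcond : ∀ c ⊆ (OrderDual.ofDual ⁻¹' 𝒳 : Set (Subgroup Γ)ᵒᵈ),
      IsChain (· ≤ ·) c → ∀ y ∈ c, ∃ ub ∈ (OrderDual.ofDual ⁻¹' 𝒳 : Set (Subgroup Γ)ᵒᵈ),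
        ∀ z ∈ c, z ≤ ub := by
    intro c hc hchain y hy
    refine ⟨OrderDual.toDual (sInf (OrderDual.ofDual '' c)), ?_, ?_⟩
    · refine sInf_chain_mem hX (by rintro _ ⟨z, hz, rfl⟩; exact hc hz) ?_ ⟨y, y, hy, rfl⟩
      rintro _ ⟨p, hp, rfl⟩ _ ⟨q, hq, rfl⟩ hpq
      exact (hchain hp hq (fun h => hpq (congrArg _ h))).symm.imp id id
    · intro z hz
      show sInf (OrderDual.ofDual '' c) ≤ OrderDual.ofDual z
      exact sInf_le ⟨z, hz, rfl⟩
  obtain ⟨m, hYm, hm𝒳, hmax⟩ := @zorn_le_nonempty₀ (Subgroup Γ)ᵒᵈ _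
      (OrderDual.ofDual ⁻¹' 𝒳) hcond (OrderDual.toDual Y) hY
  refine ⟨OrderDual.ofDual m, hm𝒳, hYm, fun X' hX' hle => ?_⟩
  exact le_antisymm hle (hmax hX' hle)

/-- Let `Γ` be a group and `𝒳` a Chabauty-closed set of subgroups of `Γ`.
If every minimal element of `𝒳` is finitely generated, then the set of minimal elements of
`𝒳` is finite. -/
theorem stmt7 {Γ : Type*} [Group Γ] (𝒳 : Set (Subgroup Γ))
    (hX : IsClosed (chi '' 𝒳))
    (hfg : ∀ X ∈ 𝒳, (∀ X' ∈ 𝒳, X' ≤ X → X' = X) → X.FG) :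
    {X ∈ 𝒳 | ∀ X' ∈ 𝒳, X' ≤ X → X' = X}.Finite := by
  classical
  set M := {X ∈ 𝒳 | ∀ X' ∈ 𝒳, X' ≤ X → X' = X} with hM
  -- choose a finite generating set for each minimal element
  have hfg' : ∀ X : M, ∃ S : Finset Γ, Subgroup.closure (S : Set Γ) = (X : Subgroup Γ) := by
    rintro ⟨X, hX𝒳, hXmin⟩
    exact hfg X hX𝒳 hXmin
  choose S hS using hfg'
  -- the open set associated to a minimal element
  let U : M → Set (Γ → Bool) := fun X => {f | ∀ s ∈ S X, f s = true}
  have hUopen : ∀ X, IsOpen (U X) := by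
    intro X
    have : U X = ⋂ s ∈ S X, (fun f : Γ → Bool => f s) ⁻¹' {true} := by
      ext f; simp [U]
    rw [this]
    exact isOpen_biInter_finset fun s _ =>
      (continuous_apply s).isOpen_preimage _ (isOpen_discrete _)
  -- compactness of chi '' 𝒳
  have hKcompact : IsCompact (chi '' 𝒳) := hX.isCompact
  -- these sets cover chi '' 𝒳
  have hcover : chi '' 𝒳 ⊆ ⋃ X : M, U X := by
    rintro _ ⟨Y, hY, rfl⟩
    obtain ⟨X0, hX0𝒳, hX0Y, hX0min⟩ := exists_minimal_le hX hY
    have hX0M : X0 ∈ M := ⟨hX0𝒳, hX0min⟩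
    refine Set.mem_iUnion.mpr ⟨⟨X0, hX0M⟩, ?_⟩
    intro s hs
    have hsX0 : s ∈ X0 := by
      have := Subgroup.subset_closure (k := (S ⟨X0, hX0M⟩ : Set Γ)) hs
      rwa [hS ⟨X0, hX0M⟩] at this
    exact (chi_apply Y s).mpr (hX0Y hsX0)
  obtain ⟨t, ht⟩ := hKcompact.elim_finite_subcover U hUopen hcover
  -- every minimal element is in t
  have hsub : M ⊆ (fun X : M => (X : Subgroup Γ)) '' (t : Set M) := by
    intro Y hY
    have hchiY : chi Y ∈ chi '' 𝒳 := ⟨Y, hY.1, rfl⟩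
    obtain ⟨X, hXt, hYU⟩ := Set.mem_iUnion₂.mp (ht hchiY)
    -- S X ⊆ Y, so X ≤ Y, so X = Y by minimality of Y
    have hXY : (X : Subgroup Γ) ≤ Y := by
      rw [← hS X]
      apply Subgroup.closure_le (K := Y) |>.mpr
      intro s hs
      exact (chi_apply Y s).mp (hYU s hs)
    have := hY.2 X X.2.1 hXY
    exact ⟨X, hXt, this⟩
  exact Set.Finite.subset (t.finite_toSet.image _) hsub
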